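/- Let ρ be a strongly regular relation on a hypergroup H, and let δ be the congruence on the group G = H/ρ given by the commutator subgroup G' (i.e. δ-classes are the cosets of G'). Then δ∗ρ is the smallest strongly regular relation on H containing ρ whose quotient H/(δ∗ρ) is an abelian group. In particular, taking ρ = β* yields γ* = δ∗β*. -/

import Mathlib

open Set

/-- A hypergroup: a nonempty-set-valued binary hyperoperation that is associative
and reproductive. -/
structure Hypergroup (H : Type) where
  hmul : H → H → Set H
  nonempty : ∀ a b, (hmul a b).Nonempty
  assoc : ∀ a b c, (⋃ x ∈ hmul a b, hmul x c) = ⋃ y ∈ hmul b c, hmul a y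
  reproL : ∀ a, (⋃ x, hmul a x) = Set.univ
  reproR : ∀ a, (⋃ x, hmul x a) = Set.univ

namespace Hypergroup

variable {H : Type}

/-- Product of two subsets. -/
def smul (hg : Hypergroup H) (A B : Set H) : Set H := ⋃ a ∈ A, ⋃ b ∈ B, hg.hmul a b

/-- Hyperproduct of an element with a list of further factors. -/
def hprod (hg : Hypergroup H) : H → List H → Set H
  | a, [] => {a}
  | a, b :: l => ⋃ x ∈ hg.hmul a b, hg.hprod x l

/-- Hyperproduct of a (nonempty) list of factors. -/
def sprod (hg : Hypergroup H) : List H → Set H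
  | [] => ∅
  | a :: l => hg.hprod a l

/-- The relation β : being together in some finite hyperproduct. -/
def beta (hg : Hypergroup H) (a b : H) : Prop := ∃ l, a ∈ hg.sprod l ∧ b ∈ hg.sprod l

/-- β*, the transitive (equivalence) closure of β. -/
def betaStar (hg : Hypergroup H) : H → H → Prop := Relation.EqvGen hg.beta

/-- The relation γ : lying in hyperproducts of permuted factor lists. -/
def gamma (hg : Hypergroup H) (a b : H) : Prop :=
  ∃ l l' : List H, l.Perm l' ∧ a ∈ hg.sprod l ∧ b ∈ hg.sprod l'

/-- γ*, the transitive (equivalence) closure of γ. -/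
def gammaStar (hg : Hypergroup H) : H → H → Prop := Relation.EqvGen hg.gamma

/-- A strongly regular equivalence relation. -/
def StronglyRegular (hg : Hypergroup H) (r : H → H → Prop) : Prop :=
  Equivalence r ∧
  ∀ a b x, r a b →
    (∀ u ∈ hg.hmul a x, ∀ v ∈ hg.hmul b x, r u v) ∧
    (∀ u ∈ hg.hmul x a, ∀ v ∈ hg.hmul x b, r u v)

/-- A regular equivalence relation. -/
def Regular (hg : Hypergroup H) (r : H → H → Prop) : Prop :=
  Equivalence r ∧
  ∀ a b x, r a b →
    ((∀ u ∈ hg.hmul a x, ∃ v ∈ hg.hmul b x, r u v) ∧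
     (∀ v ∈ hg.hmul b x, ∃ u ∈ hg.hmul a x, r u v)) ∧
    ((∀ u ∈ hg.hmul x a, ∃ v ∈ hg.hmul x b, r u v) ∧
     (∀ v ∈ hg.hmul x b, ∃ u ∈ hg.hmul x a, r u v))

/-- A subhypergroup: nonempty, closed under the hyperoperation, reproductive inside. -/
def IsSubhypergroup (hg : Hypergroup H) (K : Set H) : Prop :=
  K.Nonempty ∧ (∀ a ∈ K, ∀ b ∈ K, hg.hmul a b ⊆ K) ∧
  (∀ a ∈ K, K ⊆ hg.smul {a} K) ∧ (∀ a ∈ K, K ⊆ hg.smul K {a})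

/-- A closed subhypergroup: solutions of `b ∈ a∘x`, `b ∈ x∘a` with `a,b ∈ K` lie in `K`. -/
def IsClosed (hg : Hypergroup H) (K : Set H) : Prop :=
  ∀ a ∈ K, ∀ b ∈ K, ∀ x, (b ∈ hg.hmul a x → x ∈ K) ∧ (b ∈ hg.hmul x a → x ∈ K)

/-- A complete part: if a finite hyperproduct meets it, it contains it. -/
def IsCompletePart (hg : Hypergroup H) (C : Set H) : Prop :=
  ∀ l : List H, l ≠ [] → (hg.sprod l ∩ C).Nonempty → hg.sprod l ⊆ C

/-- The β-heart `S_β` : elements whose β*-class acts as identity. -/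
def heartBeta (hg : Hypergroup H) : Set H :=
  {h | ∀ x, ∀ z ∈ hg.hmul x h, hg.betaStar z x}

/-- The γ-heart `S_γ` (the derived subhypergroup `H'`). -/
def heartGamma (hg : Hypergroup H) : Set H :=
  {h | ∀ x, ∀ z ∈ hg.hmul x h, hg.gammaStar z x}

/-- The coset `x ∘ K`. -/
def coset (hg : Hypergroup H) (K : Set H) (x : H) : Set H := hg.smul {x} K

/-- Normal subhypergroup: `x ∘ K = K ∘ x` for all `x`. -/
def IsNormal (hg : Hypergroup H) (K : Set H) : Prop :=
  ∀ x, hg.smul {x} K = hg.smul K {x}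

/-- `φ : H → G` realizes the quotient group of `H` modulo the relation `r`. -/
def IsQuotientGroupMap (hg : Hypergroup H) (r : H → H → Prop) {G : Type} [Group G]
    (φ : H → G) : Prop :=
  Function.Surjective φ ∧ (∀ a b, φ a = φ b ↔ r a b) ∧
  ∀ a b, ∀ z ∈ hg.hmul a b, φ z = φ a * φ b

/-- The set of identities of a hypergroup. -/
def Ident (hg : Hypergroup H) : Set H :=
  {e | ∀ x, x ∈ hg.hmul e x ∧ x ∈ hg.hmul x e}

/-- `C_H(x)`. -/
def Cset (hg : Hypergroup H) (x : H) : Set H :=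
  {y | (hg.Ident ∩ (hg.hmul y x ∩ hg.hmul x y)).Nonempty}

/-- A strongly regular hypergroup: identities exist and each `C_H(x)` is a singleton. -/
def IsStronglyRegularHypergroup (hg : Hypergroup H) : Prop :=
  hg.Ident.Nonempty ∧ ∀ x, ∃ y, hg.Cset x = {y}

end Hypergroup

/-- A canonical hypergroup. -/
structure CanonicalHypergroup (H : Type) extends Hypergroup H where
  comm : ∀ a b, hmul a b = hmul b a
  zero : H
  zero_hmul : ∀ x, hmul zero x = {x}
  inv : H → H
  inv_spec : ∀ x, zero ∈ hmul x (inv x)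
  inv_unique : ∀ x y, zero ∈ hmul x y → y = inv x
  reversible : ∀ x y z, x ∈ hmul y z → y ∈ hmul x (inv z)

/-- `π : H → Q` realizes the quotient hypergroup `H/K`. -/
def IsQuotientHypergroupMap {H Q : Type} (hg : Hypergroup H) (K : Set H)
    (hq : Hypergroup Q) (π : H → Q) : Prop :=
  Function.Surjective π ∧ (∀ x y, π x = π y ↔ hg.coset K x = hg.coset K y) ∧
  ∀ x y, hq.hmul (π x) (π y) = π '' hg.hmul x y

namespace Hypergroup

variable {H : Type} (hg : Hypergroup H)

private lemma aux_hprod_append (a : H) (l1 l2 : List H) :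
    hg.hprod a (l1 ++ l2) = ⋃ y ∈ hg.hprod a l1, hg.hprod y l2 := by
  induction l1 generalizing a with
  | nil => simp [hprod]
  | cons b t ih =>
    simp only [List.cons_append, hprod]
    ext z
    simp only [mem_iUnion, exists_prop]
    constructor
    · rintro ⟨x, hx, hz⟩
      rw [ih x] at hz
      simp only [mem_iUnion, exists_prop] at hz
      obtain ⟨y, hy, hz⟩ := hz
      exact ⟨y, ⟨x, hx, hy⟩, hz⟩
    · rintro ⟨y, ⟨x, hx, hy⟩, hz⟩
      refine ⟨x, hx, ?_⟩
      rw [ih x]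
      simp only [mem_iUnion, exists_prop]
      exact ⟨y, hy, hz⟩

private lemma aux_mem_sprod_concat {a u x : H} {l : List H}
    (ha : a ∈ hg.sprod l) (hu : u ∈ hg.hmul a x) : u ∈ hg.sprod (l ++ [x]) := by
  cases l with
  | nil => simp [sprod] at ha
  | cons c t =>
    simp only [sprod, List.cons_append] at ha ⊢
    rw [aux_hprod_append]
    simp only [mem_iUnion, exists_prop]
    refine ⟨a, ha, ?_⟩
    simp only [hprod, mem_iUnion, exists_prop]
    exact ⟨u, hu, rfl⟩

private lemma aux_mul_subset_hprod_cons {a : H} (x : H) {c : H} {t : List H}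
    (ha : a ∈ hg.hprod c t) : hg.hmul x a ⊆ hg.hprod x (c :: t) := by
  induction t generalizing c with
  | nil =>
    simp only [hprod, mem_singleton_iff] at ha
    subst ha
    intro u hu
    simp only [hprod, mem_iUnion, exists_prop]
    exact ⟨u, hu, rfl⟩
  | cons d t' ih =>
    simp only [hprod, mem_iUnion, exists_prop] at ha
    obtain ⟨y, hy, ha'⟩ := ha
    intro u hu
    have h1 := ih ha' hu
    simp only [hprod, mem_iUnion, exists_prop] at h1
    obtain ⟨z, hz, hu'⟩ := h1
    have h2 : z ∈ ⋃ w ∈ hg.hmul x c, hg.hmul w d := by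
      rw [hg.assoc]
      exact mem_biUnion hy hz
    simp only [mem_iUnion, exists_prop] at h2
    obtain ⟨w, hw, hz'⟩ := h2
    simp only [hprod, mem_iUnion, exists_prop]
    exact ⟨w, hw, z, hz', hu'⟩

private lemma aux_mem_sprod_cons {a u x : H} {l : List H}
    (ha : a ∈ hg.sprod l) (hu : u ∈ hg.hmul x a) : u ∈ hg.sprod (x :: l) := by
  cases l with
  | nil => simp [sprod] at ha
  | cons c t =>
    simp only [sprod] at ha ⊢
    exact aux_mul_subset_hprod_cons hg x ha hu

private lemma aux_mem_sprod_pair {a b u : H} (hu : u ∈ hg.hmul a b) :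
    u ∈ hg.sprod [a, b] := by
  simp only [sprod, hprod, mem_iUnion, exists_prop]
  exact ⟨u, hu, rfl⟩

private lemma aux_gammaStar_sr : hg.StronglyRegular hg.gammaStar := by
  refine ⟨Relation.EqvGen.is_equivalence _, ?_⟩
  suffices h : ∀ a b, hg.gammaStar a b → ∀ x,
      (∀ u ∈ hg.hmul a x, ∀ v ∈ hg.hmul b x, hg.gammaStar u v) ∧
      (∀ u ∈ hg.hmul x a, ∀ v ∈ hg.hmul x b, hg.gammaStar u v) by
    intro a b x hab; exact h a b hab x
  intro a b hab
  induction hab with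
  | rel a b hab =>
    obtain ⟨l, l', hperm, hal, hbl'⟩ := hab
    intro x
    constructor
    · intro u hu v hv
      exact Relation.EqvGen.rel _ _ ⟨l ++ [x], l' ++ [x], hperm.append_right [x],
        aux_mem_sprod_concat hg hal hu, aux_mem_sprod_concat hg hbl' hv⟩
    · intro u hu v hv
      exact Relation.EqvGen.rel _ _ ⟨x :: l, x :: l', hperm.cons x,
        aux_mem_sprod_cons hg hal hu, aux_mem_sprod_cons hg hbl' hv⟩
  | refl a =>
    intro x
    constructor
    · intro u hu v hv
      exact Relation.EqvGen.rel _ _ ⟨[a, x], [a, x], List.Perm.refl _,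
        aux_mem_sprod_pair hg hu, aux_mem_sprod_pair hg hv⟩
    · intro u hu v hv
      exact Relation.EqvGen.rel _ _ ⟨[x, a], [x, a], List.Perm.refl _,
        aux_mem_sprod_pair hg hu, aux_mem_sprod_pair hg hv⟩
  | symm a b _ ih =>
    intro x
    exact ⟨fun u hu v hv => Relation.EqvGen.symm _ _ ((ih x).1 v hv u hu),
      fun u hu v hv => Relation.EqvGen.symm _ _ ((ih x).2 v hv u hu)⟩
  | trans a b c _ _ ih1 ih2 =>
    intro x
    constructor
    · intro u hu v hv
      obtain ⟨w, hw⟩ := hg.nonempty b x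
      exact Relation.EqvGen.trans _ _ _ ((ih1 x).1 u hu w hw) ((ih2 x).1 w hw v hv)
    · intro u hu v hv
      obtain ⟨w, hw⟩ := hg.nonempty x b
      exact Relation.EqvGen.trans _ _ _ ((ih1 x).2 u hu w hw) ((ih2 x).2 w hw v hv)

private lemma aux_phi_hprod {G : Type} [Group G] (φ : H → G)
    (hm : ∀ a b, ∀ z ∈ hg.hmul a b, φ z = φ a * φ b) :
    ∀ (l : List H) (a u : H), u ∈ hg.hprod a l → φ u = φ a * (l.map φ).prod := by
  intro l
  induction l with
  | nil =>
    intro a u hu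
    simp only [hprod, mem_singleton_iff] at hu
    subst hu; simp
  | cons b t ih =>
    intro a u hu
    simp only [hprod, mem_iUnion, exists_prop] at hu
    obtain ⟨x, hx, hu⟩ := hu
    rw [ih x u hu, hm a b x hx]
    simp [mul_assoc]

private lemma aux_phi_sprod {G : Type} [Group G] (φ : H → G)
    (hm : ∀ a b, ∀ z ∈ hg.hmul a b, φ z = φ a * φ b)
    {l : List H} {u : H} (hu : u ∈ hg.sprod l) : φ u = (l.map φ).prod := by
  cases l with
  | nil => simp [sprod] at hu
  | cons c t =>
    simp only [sprod] at hu
    rw [aux_phi_hprod hg φ hm t c u hu]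
    simp

end Hypergroup

private lemma aux_inv_mul_to_mul_inv {G : Type} [Group G] (N : Subgroup G) [N.Normal]
    {a b : G} (h : a⁻¹ * b ∈ N) : a * b⁻¹ ∈ N := by
  have h1 := N.inv_mem h
  have h2 := Subgroup.Normal.conj_mem ‹N.Normal› _ h1 a
  simpa [mul_assoc] using h2

open Hypergroup in
/-- for a strongly regular relation ρ with quotient group G = H/ρ
and δ the congruence mod the commutator subgroup G', the relation δ∗ρ is the
smallest strongly regular relation containing ρ with abelian quotient;
for ρ = β* this gives γ* = δ∗β*. -/
theorem stmt19 {H : Type} (hg : Hypergroup H) (r : H → H → Prop)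
    (hsr : hg.StronglyRegular r) {G : Type} [Group G] (φ : H → G)
    (hφ : hg.IsQuotientGroupMap r φ) :
    -- δ∗ρ is strongly regular
    hg.StronglyRegular (fun a b => φ a * (φ b)⁻¹ ∈ commutator G) ∧
    -- it contains ρ
    (∀ a b, r a b → φ a * (φ b)⁻¹ ∈ commutator G) ∧
    -- its quotient is abelian
    (∀ a b : H, ∀ u ∈ hg.hmul a b, ∀ v ∈ hg.hmul b a,
      φ u * (φ v)⁻¹ ∈ commutator G) ∧
    -- it is the smallest such relation
    (∀ s : H → H → Prop, hg.StronglyRegular s → (∀ a b, r a b → s a b) →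
      (∀ a b : H, ∀ u ∈ hg.hmul a b, ∀ v ∈ hg.hmul b a, s u v) →
      ∀ a b, φ a * (φ b)⁻¹ ∈ commutator G → s a b) ∧
    -- in particular, if ρ = β*, then δ∗ρ = γ*
    ((∀ a b, r a b ↔ hg.betaStar a b) →
      ∀ a b, (φ a * (φ b)⁻¹ ∈ commutator G) ↔ hg.gammaStar a b) := by
  obtain ⟨hsurj, hker, hm⟩ := hφ
  -- Part 1 : strong regularity
  have heq : Equivalence (fun a b => φ a * (φ b)⁻¹ ∈ commutator G) := by
    constructor
    · intro a; simpa using (commutator G).one_mem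
    · intro a b h; simpa using (commutator G).inv_mem h
    · intro a b c h1 h2
      simpa [mul_assoc] using (commutator G).mul_mem h1 h2
  have part1 : hg.StronglyRegular (fun a b => φ a * (φ b)⁻¹ ∈ commutator G) := by
    refine ⟨heq, ?_⟩
    intro a b x h
    constructor
    · intro u hu v hv
      rw [hm a x u hu, hm b x v hv]
      simpa [mul_inv_rev, mul_assoc] using h
    · intro u hu v hv
      rw [hm x a u hu, hm x b v hv]
      have := Subgroup.Normal.conj_mem (inferInstance : (commutator G).Normal) _ h (φ x)
      simpa [mul_inv_rev, mul_assoc] using this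
  -- Part 2 : contains r
  have part2 : ∀ a b, r a b → φ a * (φ b)⁻¹ ∈ commutator G := by
    intro a b hr
    rw [(hker a b).2 hr]
    simpa using (commutator G).one_mem
  -- Part 3 : abelian quotient
  have part3 : ∀ a b : H, ∀ u ∈ hg.hmul a b, ∀ v ∈ hg.hmul b a,
      φ u * (φ v)⁻¹ ∈ commutator G := by
    intro a b u hu v hv
    rw [hm a b u hu, hm b a v hv]
    open scoped commutatorElement in
    have hc : φ a * φ b * (φ b * φ a)⁻¹ = ⁅φ a, φ b⁆ := by group
    rw [hc, commutator_def]
    exact Subgroup.commutator_mem_commutator (Subgroup.mem_top _) (Subgroup.mem_top _)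
  -- Part 4 : smallest
  have part4 : ∀ s : H → H → Prop, hg.StronglyRegular s → (∀ a b, r a b → s a b) →
      (∀ a b : H, ∀ u ∈ hg.hmul a b, ∀ v ∈ hg.hmul b a, s u v) →
      ∀ a b, φ a * (φ b)⁻¹ ∈ commutator G → s a b := by
    intro s hs hrs hcs a b hab
    set σ : G → G → Prop := fun g h => ∃ a b, φ a = g ∧ φ b = h ∧ s a b with hσ
    have swell : ∀ a b, s a b → ∀ a' b', φ a' = φ a → φ b' = φ b → s a' b' := by
      intro a b hsab a' b' ha hb
      exact hs.1.trans (hrs a' a ((hker _ _).1 ha))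
        (hs.1.trans hsab (hrs b b' ((hker _ _).1 hb.symm)))
    have σwell : ∀ g h, σ g h → ∀ a b, φ a = g → φ b = h → s a b := by
      rintro g h ⟨a0, b0, ha0, hb0, hs0⟩ a b ha hb
      exact swell a0 b0 hs0 a b (ha.trans ha0.symm) (hb.trans hb0.symm)
    have σrefl : ∀ g, σ g g := by
      intro g
      obtain ⟨a0, rfl⟩ := hsurj g
      exact ⟨a0, a0, rfl, rfl, hs.1.refl a0⟩
    have σsymm : ∀ g h, σ g h → σ h g := by
      rintro g h ⟨a0, b0, ha0, hb0, hs0⟩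
      exact ⟨b0, a0, hb0, ha0, hs.1.symm hs0⟩
    have σtrans : ∀ g h k, σ g h → σ h k → σ g k := by
      rintro g h k ⟨a0, b0, ha0, hb0, hs0⟩ ⟨a1, b1, ha1, hb1, hs1⟩
      exact ⟨a0, b1, ha0, hb1, hs.1.trans hs0
        (hs.1.trans (hrs b0 a1 ((hker _ _).1 (hb0.trans ha1.symm))) hs1)⟩
    have σmulr : ∀ g h k, σ g h → σ (g * k) (h * k) := by
      rintro g h k ⟨a0, b0, ha0, hb0, hs0⟩
      obtain ⟨x, rfl⟩ := hsurj k
      obtain ⟨u, hu⟩ := hg.nonempty a0 x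
      obtain ⟨v, hv⟩ := hg.nonempty b0 x
      exact ⟨u, v, by rw [hm a0 x u hu, ha0], by rw [hm b0 x v hv, hb0],
        (hs.2 a0 b0 x hs0).1 u hu v hv⟩
    have σmull : ∀ g h k, σ g h → σ (k * g) (k * h) := by
      rintro g h k ⟨a0, b0, ha0, hb0, hs0⟩
      obtain ⟨x, rfl⟩ := hsurj k
      obtain ⟨u, hu⟩ := hg.nonempty x a0
      obtain ⟨v, hv⟩ := hg.nonempty x b0
      exact ⟨u, v, by rw [hm x a0 u hu, ha0], by rw [hm x b0 v hv, hb0],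
        (hs.2 a0 b0 x hs0).2 u hu v hv⟩
    set N : Subgroup G :=
      { carrier := {g | σ g 1}
        one_mem' := σrefl 1
        mul_mem' := by
          intro g h hgN hhN
          have h1 : σ (g * h) (1 * h) := σmulr g 1 h hgN
          rw [one_mul] at h1
          exact σtrans _ _ _ h1 hhN
        inv_mem' := by
          intro g hgN
          have h1 : σ (g⁻¹ * g) (g⁻¹ * 1) := σmull g 1 g⁻¹ hgN
          rw [inv_mul_cancel, mul_one] at h1
          exact σsymm _ _ h1 } with hN
    have hcomm : commutator G ≤ N := by
      rw [commutator_def, Subgroup.commutator_le]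
      intro g _ h _
      obtain ⟨a0, rfl⟩ := hsurj g
      obtain ⟨b0, rfl⟩ := hsurj h
      obtain ⟨u, hu⟩ := hg.nonempty a0 b0
      obtain ⟨v, hv⟩ := hg.nonempty b0 a0
      have h1 : σ (φ a0 * φ b0) (φ b0 * φ a0) :=
        ⟨u, v, hm a0 b0 u hu, hm b0 a0 v hv, hcs a0 b0 u hu v hv⟩
      have h2 := σmulr _ _ (φ b0 * φ a0)⁻¹ h1
      rw [mul_inv_cancel] at h2
      open scoped commutatorElement in
      have h3 : φ a0 * φ b0 * (φ b0 * φ a0)⁻¹ = ⁅φ a0, φ b0⁆ := by group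
      rw [h3] at h2
      exact h2
    have h4 : σ (φ a * (φ b)⁻¹) 1 := hcomm hab
    have h5 := σmulr _ _ (φ b) h4
    rw [inv_mul_cancel_right, one_mul] at h5
    exact σwell _ _ h5 a b rfl rfl
  refine ⟨part1, part2, part3, part4, ?_⟩
  -- Part 5 : the case r = β*
  intro hrb a b
  constructor
  · intro h
    refine part4 hg.gammaStar (aux_gammaStar_sr hg) ?_ ?_ a b h
    · intro a' b' hr
      exact Relation.EqvGen.mono
        (fun x y ⟨l, h1, h2⟩ => ⟨l, l, List.Perm.refl _, h1, h2⟩) _ _ ((hrb a' b').1 hr)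
    · intro a' b' u hu v hv
      exact Relation.EqvGen.rel _ _ ⟨[a', b'], [b', a'], List.Perm.swap _ _ _,
        aux_mem_sprod_pair hg hu, aux_mem_sprod_pair hg hv⟩
  · intro h
    induction h with
    | rel x y hxy =>
      obtain ⟨l, l', hperm, hxl, hyl'⟩ := hxy
      have hx : φ x = (l.map φ).prod := aux_phi_sprod hg φ hm hxl
      have hy : φ y = (l'.map φ).prod := aux_phi_sprod hg φ hm hyl'
      have hab : Abelianization.of (φ x) = Abelianization.of (φ y) := by
        rw [hx, hy, MonoidHom.map_list_prod, MonoidHom.map_list_prod,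
          List.map_map, List.map_map]
        exact List.Perm.prod_eq (hperm.map _)
      exact aux_inv_mul_to_mul_inv _ (QuotientGroup.eq.1 hab)
    | refl x => simpa using (commutator G).one_mem
    | symm x y _ ih => simpa using (commutator G).inv_mem ih
    | trans x y z _ _ ih1 ih2 =>
      simpa [mul_assoc] using (commutator G).mul_mem ih1 ih2
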